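/- For m ≥ 2, the k-clusters of length n with respect to the monotone pattern 12...m are in bijection with compositions of n−m into k−1 parts each of size at most m−1. In particular, the number of k-clusters of length n with respect to 12...m equals the number of sequences (i_1,...,i_k) with i_1 = 1, i_k = n−m+1, and 1 ≤ i_{j+1} − i_j ≤ m−1 for all j. -/

import Mathlib

open scoped Classical

/-- The q-integer `[k]_q = 1 + q + ... + q^(k-1)`. -/
noncomputable def qint (q : ℝ) (k : ℕ) : ℝ := ∑ i ∈ Finset.range k, q ^ i

/-- The q-factorial `[n]_q! = [1]_q [2]_q ⋯ [n]_q`. -/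
noncomputable def qfact (q : ℝ) (n : ℕ) : ℝ := ∏ i ∈ Finset.range n, qint q (i + 1)

/-- The number of inversions of a permutation of `{0, ..., n-1}`. -/
def inversions {n : ℕ} (π : Equiv.Perm (Fin n)) : ℕ :=
  (Finset.univ.filter (fun p : Fin n × Fin n => p.1 < p.2 ∧ π p.2 < π p.1)).card

/-- The pattern `σ ∈ S_m` occurs consecutively in `π ∈ S_n` starting at (0-indexed) position `j`:
the window `π_j, ..., π_{j+m-1}` is order-isomorphic to `σ`. -/
def occursAt {m n : ℕ} (σ : Equiv.Perm (Fin m)) (π : Equiv.Perm (Fin n)) (j : ℕ) : Prop :=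
  ∃ h : j + m ≤ n, ∀ a b : Fin m,
    σ a < σ b ↔
      π ⟨j + (a : ℕ), lt_of_lt_of_le (Nat.add_lt_add_left a.isLt j) h⟩ <
      π ⟨j + (b : ℕ), lt_of_lt_of_le (Nat.add_lt_add_left b.isLt j) h⟩

/-- `π` avoids `σ` as a consecutive pattern. -/
def avoids {m n : ℕ} (σ : Equiv.Perm (Fin m)) (π : Equiv.Perm (Fin n)) : Prop :=
  ∀ j : ℕ, ¬ occursAt σ π j

/-- `P_n(σ, q)`: the probability that a Mallows(q) random permutation of length `n`
avoids `σ` as a consecutive pattern. -/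
noncomputable def Pn (m : ℕ) (σ : Equiv.Perm (Fin m)) (q : ℝ) (n : ℕ) : ℝ :=
  (∑ π ∈ Finset.univ.filter (fun π : Equiv.Perm (Fin n) => avoids σ π),
    q ^ inversions π) / qfact q n

/-- `(π; idx 0, …, idx (k-1))` is a `k`-cluster of length `n` with respect to `σ ∈ S_m`
(0-indexed positions). -/
def IsCluster {m n k : ℕ} (σ : Equiv.Perm (Fin m)) (π : Equiv.Perm (Fin n))
    (idx : Fin k → ℕ) : Prop :=
  StrictMono idx ∧
  (∀ j : Fin k, (j : ℕ) = 0 → idx j = 0) ∧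
  (∀ j : Fin k, (j : ℕ) = k - 1 → idx j + m = n) ∧
  (∀ j : Fin k, ∀ h : (j : ℕ) + 1 < k, idx ⟨(j : ℕ) + 1, h⟩ ≤ idx j + (m - 1)) ∧
  (∀ j : Fin k, occursAt σ π (idx j))

/-- `k`-clusters of length `n` with respect to `12⋯m` are in bijection with
compositions of `n-m` into `k-1` parts of size at most `m-1`; in particular their number
equals the number of position sequences with first term `0` (i.e. `1`, 1-indexed), last term
`n-m` (i.e. `n-m+1`, 1-indexed), and consecutive differences in `[1, m-1]`. -/
private lemma strictMono_of_adj {N : ℕ} {α : Type*} [Preorder α] {f : Fin N → α}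
    (h : ∀ i : ℕ, ∀ hi : i + 1 < N, f ⟨i, by omega⟩ < f ⟨i + 1, hi⟩) : StrictMono f := by
  have key : ∀ b (hb : b < N), ∀ a (ha : a < N), a < b → f ⟨a, ha⟩ < f ⟨b, hb⟩ := by
    intro b
    induction b with
    | zero => intro _ _ _ hab; omega
    | succ b ih =>
      intro hb a ha hab
      rcases Nat.lt_or_ge a b with h' | h'
      · exact lt_trans (ih (by omega) a ha h') (h b hb)
      · have : a = b := by omega
        subst this
        exact h a hb
  rintro ⟨a, ha⟩ ⟨b, hb⟩ hab
  exact key b hb a ha (Fin.mk_lt_mk.mp hab)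

private lemma pi_eq_refl {m n k : ℕ} (hm : 2 ≤ m) (hk : 1 ≤ k)
    {π : Equiv.Perm (Fin n)} {idx : Fin k → ℕ}
    (hcl : IsCluster (Equiv.refl (Fin m)) π idx) : π = Equiv.refl (Fin n) := by
  obtain ⟨hmono, h0, hlast, hgap, hocc⟩ := hcl
  have hadj : ∀ x y : Fin n, (x : ℕ) + 1 = (y : ℕ) → π x < π y := by
    intro x y hxy
    set i := (x : ℕ) with hi
    have hi1 : i + 1 < n := by have := y.isLt; omega
    set S : Finset (Fin k) := Finset.univ.filter (fun j => idx j ≤ i) with hS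
    have hne : S.Nonempty := ⟨⟨0, hk⟩, by simp [hS, h0 ⟨0, hk⟩ rfl]⟩
    set j := S.max' hne with hj
    have hjS : j ∈ S := S.max'_mem hne
    have hji : idx j ≤ i := by simpa [hS] using hjS
    have hwin : i + 1 < idx j + m := by
      by_cases hl : (j : ℕ) = k - 1
      · have := hlast j hl; omega
      · have hjk : (j : ℕ) + 1 < k := by have := j.isLt; omega
        have hnext : i < idx ⟨(j : ℕ) + 1, hjk⟩ := by
          by_contra hle
          push_neg at hle
          have hmem : (⟨(j : ℕ) + 1, hjk⟩ : Fin k) ∈ S := by simp [hS, hle]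
          have h2 := S.le_max' _ hmem
          rw [← hj, Fin.le_def] at h2
          simp at h2
        have := hgap j hjk
        omega
    obtain ⟨hw, hocc'⟩ := hocc j
    have ha : i - idx j < m := by omega
    have hb : i + 1 - idx j < m := by omega
    have key := (hocc' ⟨i - idx j, ha⟩ ⟨i + 1 - idx j, hb⟩).mp
      (by simp only [Equiv.refl_apply, Fin.mk_lt_mk]; omega)
    convert key using 2
    · exact Fin.ext (by simp; omega)
    · exact Fin.ext (by simp; omega)
  have hsm : StrictMono ⇑π := strictMono_of_adj (fun i hi => hadj ⟨i, by omega⟩ ⟨i + 1, hi⟩ rfl)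
  have hrange : Set.range ⇑π = Set.range (id : Fin n → Fin n) := by
    rw [Equiv.range_eq_univ, Set.range_id]
  have hwf : WellFoundedLT (Fin n) := inferInstance
  have := (hsm.range_inj strictMono_id).1 hrange
  exact Equiv.ext fun x => congrFun this x

private lemma cluster_iff {m n k : ℕ} (hm : 2 ≤ m) (hk : 1 ≤ k) (hn : m ≤ n)
    (π : Equiv.Perm (Fin n)) (idx : Fin k → ℕ) :
    IsCluster (Equiv.refl (Fin m)) π idx ↔
      (π = Equiv.refl (Fin n) ∧ idx ⟨0, hk⟩ = 0 ∧ idx ⟨k - 1, Nat.sub_lt hk Nat.one_pos⟩ = n - m ∧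
        ∀ j : Fin k, ∀ h : (j : ℕ) + 1 < k,
          idx j + 1 ≤ idx ⟨(j : ℕ) + 1, h⟩ ∧ idx ⟨(j : ℕ) + 1, h⟩ ≤ idx j + (m - 1)) := by
  constructor
  · intro hcl
    refine ⟨pi_eq_refl hm hk hcl, ?_, ?_, ?_⟩
    · exact hcl.2.1 ⟨0, hk⟩ rfl
    · have := hcl.2.2.1 ⟨k - 1, by omega⟩ rfl; omega
    · intro j h
      refine ⟨?_, hcl.2.2.2.1 j h⟩
      have hlt : j < (⟨(j : ℕ) + 1, h⟩ : Fin k) := by rw [Fin.lt_def]; simp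
      exact hcl.1 hlt
  · rintro ⟨hπ, h0, hlast, hdiff⟩
    subst hπ
    have hsm : StrictMono idx := strictMono_of_adj (fun i hi => by
      have h2 : idx ⟨i, by omega⟩ + 1 ≤ idx ⟨i + 1, hi⟩ := (hdiff ⟨i, by omega⟩ hi).1
      omega)
    have hub : ∀ j : Fin k, idx j ≤ n - m := by
      intro j
      have hle : j ≤ (⟨k - 1, by omega⟩ : Fin k) := by
        rw [Fin.le_def]; have := j.isLt; simp; omega
      calc idx j ≤ idx ⟨k - 1, by omega⟩ := hsm.monotone hle
        _ = n - m := hlast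
    refine ⟨hsm, ?_, ?_, ?_, ?_⟩
    · intro j hj
      have : j = ⟨0, hk⟩ := Fin.ext hj
      rw [this, h0]
    · intro j hj
      have : j = ⟨k - 1, by omega⟩ := Fin.ext hj
      rw [this, hlast]; omega
    · intro j h; exact (hdiff j h).2
    · intro j
      refine ⟨by have := hub j; omega, ?_⟩
      intro a b
      simp only [Equiv.refl_apply, Fin.lt_def, Fin.val_mk]
      omega

private def diffMap (k : ℕ) (idx : Fin k → ℕ) : Fin (k - 1) → ℕ :=
  fun j => idx ⟨(j : ℕ) + 1, by omega⟩ - idx ⟨(j : ℕ), by omega⟩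

private def natDiff (k : ℕ) (idx : Fin k → ℕ) : ℕ → ℕ :=
  fun i => if h : i + 1 < k then idx ⟨i + 1, h⟩ - idx ⟨i, by omega⟩ else 0

private def sumMap (k : ℕ) (c : Fin (k - 1) → ℕ) : Fin k → ℕ :=
  fun j => ∑ i ∈ Finset.range (j : ℕ), (if h : i < k - 1 then c ⟨i, h⟩ else 0)

private lemma sum_diffs {k : ℕ} (hk : 1 ≤ k) (idx : Fin k → ℕ)
    (hmono : ∀ j : Fin k, ∀ h : (j : ℕ) + 1 < k, idx j + 1 ≤ idx ⟨(j : ℕ) + 1, h⟩) :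
    ∀ v (hv : v < k),
      (∑ i ∈ Finset.range v, natDiff k idx i) = idx ⟨v, hv⟩ - idx ⟨0, hk⟩ := by
  have hmono' : ∀ a b (ha : a < k) (hb : b < k), a ≤ b → idx ⟨a, ha⟩ ≤ idx ⟨b, hb⟩ := by
    have hsm : StrictMono idx := strictMono_of_adj (fun i hi => by
      have h2 : idx ⟨i, by omega⟩ + 1 ≤ idx ⟨i + 1, hi⟩ := hmono ⟨i, by omega⟩ hi
      omega)
    intro a b ha hb hab
    exact hsm.monotone (by rw [Fin.le_def]; exact hab)
  intro v
  induction v with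
  | zero => intro hv; simp
  | succ v ih =>
    intro hv
    have e : natDiff k idx v = idx ⟨v + 1, hv⟩ - idx ⟨v, by omega⟩ := by
      simp only [natDiff]
      rw [dif_pos hv]
    rw [Finset.sum_range_succ, ih (by omega), e]
    have h1 : idx ⟨v, by omega⟩ + 1 ≤ idx ⟨v + 1, hv⟩ := hmono ⟨v, by omega⟩ hv
    have h2 : idx ⟨0, hk⟩ ≤ idx ⟨v, by omega⟩ := hmono' 0 v hk (by omega) (by omega)
    omega

theorem clusters_monotone_eq_compositions (m n k : ℕ) (hm : 2 ≤ m) (hk : 1 ≤ k)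
    (hn : m ≤ n) :
    ({p : Equiv.Perm (Fin n) × (Fin k → ℕ) |
        IsCluster (Equiv.refl (Fin m)) p.1 p.2}.ncard
      = {c : Fin (k - 1) → ℕ |
          (∀ j, 1 ≤ c j ∧ c j ≤ m - 1) ∧ ∑ j, c j = n - m}.ncard) ∧
    ({p : Equiv.Perm (Fin n) × (Fin k → ℕ) |
        IsCluster (Equiv.refl (Fin m)) p.1 p.2}.ncard
      = {idx : Fin k → ℕ | idx ⟨0, hk⟩ = 0 ∧ idx ⟨k - 1, by omega⟩ = n - m ∧
          ∀ j : Fin k, ∀ h : (j : ℕ) + 1 < k,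
            idx j + 1 ≤ idx ⟨(j : ℕ) + 1, h⟩ ∧
            idx ⟨(j : ℕ) + 1, h⟩ ≤ idx j + (m - 1)}.ncard) := by
  set A := {p : Equiv.Perm (Fin n) × (Fin k → ℕ) |
      IsCluster (Equiv.refl (Fin m)) p.1 p.2} with hA
  set B := {idx : Fin k → ℕ | idx ⟨0, hk⟩ = 0 ∧ idx ⟨k - 1, by omega⟩ = n - m ∧
      ∀ j : Fin k, ∀ h : (j : ℕ) + 1 < k,
        idx j + 1 ≤ idx ⟨(j : ℕ) + 1, h⟩ ∧
        idx ⟨(j : ℕ) + 1, h⟩ ≤ idx j + (m - 1)} with hB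
  set C := {c : Fin (k - 1) → ℕ |
      (∀ j, 1 ≤ c j ∧ c j ≤ m - 1) ∧ ∑ j, c j = n - m} with hC
  -- Step 1 : A ≃ B via Prod.snd
  have himg : Prod.snd '' A = B := by
    ext idx
    simp only [hA, hB, Set.mem_image, Set.mem_setOf_eq]
    constructor
    · rintro ⟨⟨π, idx'⟩, hp, rfl⟩
      exact ((cluster_iff hm hk hn π idx').1 hp).2
    · intro h
      exact ⟨(Equiv.refl (Fin n), idx), (cluster_iff hm hk hn _ idx).2 ⟨rfl, h⟩, rfl⟩
  have hinj : Set.InjOn Prod.snd A := by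
    rintro ⟨π, idx⟩ hp ⟨π', idx'⟩ hp' h
    simp only [hA, Set.mem_setOf_eq] at hp hp'
    have e1 := pi_eq_refl hm hk hp
    have e2 := pi_eq_refl hm hk hp'
    simp only at h
    rw [Prod.mk.injEq]
    exact ⟨e1.trans e2.symm, h⟩
  have eAB : A.ncard = B.ncard := by
    rw [← himg, Set.ncard_image_of_injOn hinj]
  -- Step 2 : B ≃ C via diffMap
  have himg2 : diffMap k '' B = C := by
    ext c
    simp only [hB, hC, Set.mem_image, Set.mem_setOf_eq]
    constructor
    · rintro ⟨idx, ⟨h0, hlast, hdiff⟩, rfl⟩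
      constructor
      · intro j
        have hjk : (j : ℕ) + 1 < k := by omega
        have h1 : idx ⟨(j : ℕ), by omega⟩ + 1 ≤ idx ⟨(j : ℕ) + 1, hjk⟩ :=
          (hdiff ⟨(j : ℕ), by omega⟩ hjk).1
        have h2 : idx ⟨(j : ℕ) + 1, hjk⟩ ≤ idx ⟨(j : ℕ), by omega⟩ + (m - 1) :=
          (hdiff ⟨(j : ℕ), by omega⟩ hjk).2
        have h3 : diffMap k idx j = idx ⟨(j : ℕ) + 1, hjk⟩ - idx ⟨(j : ℕ), by omega⟩ := rfl
        omega
      · have heq : ∀ j : Fin (k - 1), diffMap k idx j = natDiff k idx (j : ℕ) := by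
          intro j
          simp only [natDiff]
          rw [dif_pos (by omega : (j : ℕ) + 1 < k)]
          rfl
        calc ∑ j, diffMap k idx j
            = ∑ j : Fin (k - 1), natDiff k idx (j : ℕ) :=
              Finset.sum_congr rfl (fun j _ => heq j)
          _ = ∑ i ∈ Finset.range (k - 1), natDiff k idx i :=
              Fin.sum_univ_eq_sum_range _ _
          _ = idx ⟨k - 1, by omega⟩ - idx ⟨0, hk⟩ :=
              sum_diffs hk idx (fun j h => (hdiff j h).1) (k - 1) (by omega)
          _ = n - m := by omega
    · intro hc
      refine ⟨sumMap k c, ⟨?_, ?_, ?_⟩, ?_⟩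
      · have e0 : sumMap k c ⟨0, hk⟩
            = ∑ i ∈ Finset.range 0, (if h : i < k - 1 then c ⟨i, h⟩ else 0) := rfl
        rw [e0, Finset.sum_range_zero]
      · have e1 : sumMap k c ⟨k - 1, by omega⟩
            = ∑ i ∈ Finset.range (k - 1), (if h : i < k - 1 then c ⟨i, h⟩ else 0) := rfl
        rw [e1, ← Fin.sum_univ_eq_sum_range
          (fun i => if h : i < k - 1 then c ⟨i, h⟩ else 0) (k - 1)]
        rw [← hc.2]
        refine Finset.sum_congr rfl (fun j _ => ?_)
        rw [dif_pos j.isLt]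
      · intro j h
        have hj1 : (j : ℕ) < k - 1 := by omega
        have hstep : sumMap k c ⟨(j : ℕ) + 1, h⟩
            = sumMap k c j + c ⟨(j : ℕ), hj1⟩ := by
          have e2 : sumMap k c ⟨(j : ℕ) + 1, h⟩
              = ∑ i ∈ Finset.range ((j : ℕ) + 1),
                  (if h' : i < k - 1 then c ⟨i, h'⟩ else 0) := rfl
          rw [e2, Finset.sum_range_succ, dif_pos hj1]
          rfl
        have hb := hc.1 ⟨(j : ℕ), hj1⟩
        omega
      · funext j
        have hj1 : (j : ℕ) < k - 1 := j.isLt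
        simp only [diffMap]
        have hstep : sumMap k c ⟨(j : ℕ) + 1, by omega⟩
            = sumMap k c ⟨(j : ℕ), by omega⟩ + c ⟨(j : ℕ), hj1⟩ := by
          have e2 : sumMap k c ⟨(j : ℕ) + 1, by omega⟩
              = ∑ i ∈ Finset.range ((j : ℕ) + 1),
                  (if h' : i < k - 1 then c ⟨i, h'⟩ else 0) := rfl
          rw [e2, Finset.sum_range_succ, dif_pos hj1]
          rfl
        have hcj : c ⟨(j : ℕ), hj1⟩ = c j := rfl
        omega
  have hinj2 : Set.InjOn (diffMap k) B := by
    intro idx h1 idx' h2 hF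
    simp only [hB, Set.mem_setOf_eq] at h1 h2
    obtain ⟨h10, h1l, h1d⟩ := h1
    obtain ⟨h20, h2l, h2d⟩ := h2
    funext j
    suffices H : ∀ v (hv : v < k), idx ⟨v, hv⟩ = idx' ⟨v, hv⟩ by
      have := H (j : ℕ) j.isLt
      simpa using this
    intro v
    induction v with
    | zero =>
      intro hv
      have e1 : (⟨0, hv⟩ : Fin k) = ⟨0, hk⟩ := rfl
      rw [e1, h10, h20]
    | succ v ih =>
      intro hv
      have hFv : idx ⟨v + 1, hv⟩ - idx ⟨v, by omega⟩
          = idx' ⟨v + 1, hv⟩ - idx' ⟨v, by omega⟩ := congrFun hF ⟨v, by omega⟩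
      have hle : idx ⟨v, by omega⟩ + 1 ≤ idx ⟨v + 1, hv⟩ := (h1d ⟨v, by omega⟩ hv).1
      have hle' : idx' ⟨v, by omega⟩ + 1 ≤ idx' ⟨v + 1, hv⟩ := (h2d ⟨v, by omega⟩ hv).1
      have := ih (by omega)
      omega
  have eBC : B.ncard = C.ncard := by
    rw [← himg2, Set.ncard_image_of_injOn hinj2]
  exact ⟨eAB.trans eBC, eAB⟩
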